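/- If F is an abelian semigroup of continuous affine self-maps of a nonempty convex compact subset K of a Hausdorff topological vector space, then the family of images {f(K) : f ∈ co(F)} (images of K under finite convex combinations of elements of F) has the finite intersection property. -/

import Mathlib

open Finset

def AffOn {X : Type*} [AddCommGroup X] [Module ℝ X] (K : Set X) (f : K → K) : Prop :=
  ∀ (x y : K) (t : ℝ), 0 ≤ t → t ≤ 1 →
    ∀ h : t • (x : X) + (1 - t) • (y : X) ∈ K,
      (f ⟨_, h⟩ : X) = t • (f x : X) + (1 - t) • (f y : X)

def Co {X : Type*} [AddCommGroup X] [Module ℝ X] (K : Set X) (F : Set (K → K)) :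
    Set (K → K) :=
  {f | ∃ (n : ℕ) (α : Fin n → ℝ) (g : Fin n → (K → K)),
      (∀ i, g i ∈ F) ∧ (∀ i, 0 ≤ α i) ∧ (∑ i, α i) = 1 ∧
      ∀ x, (f x : X) = ∑ i, α i • ((g i) x : X)}

lemma affOn_sum {X : Type*} [AddCommGroup X] [Module ℝ X] {K : Set X}
    (hconv : Convex ℝ K) {f : K → K} (hf : AffOn K f) :
    ∀ (n : ℕ) (α : Fin n → ℝ) (x : Fin n → K), (∀ i, 0 ≤ α i) → (∑ i, α i) = 1 →
      ∀ h : (∑ i, α i • (x i : X)) ∈ K,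
        (f ⟨_, h⟩ : X) = ∑ i, α i • (f (x i) : X) := by
  intro n
  induction n with
  | zero => intro α x _ hsum; simp at hsum
  | succ n ih =>
    intro α x hα hsum h
    have hts : α 0 + ∑ i : Fin n, α i.succ = 1 := by
      rw [← Fin.sum_univ_succ]; exact hsum
    by_cases hs0 : (∑ i : Fin n, α i.succ) = 0
    · have hzero : ∀ i : Fin n, α i.succ = 0 := by
        have := (Finset.sum_eq_zero_iff_of_nonneg (fun i _ => hα i.succ)).mp hs0
        intro i; exact this i (Finset.mem_univ i)
      have ht1 : α 0 = 1 := by rw [hs0] at hts; linarith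
      have hpt : (∑ i, α i • (x i : X)) = (x 0 : X) := by
        rw [Fin.sum_univ_succ, ht1, one_smul]
        simp [hzero]
      have : f ⟨_, h⟩ = f (x 0) := congrArg f (Subtype.ext hpt)
      rw [this, Fin.sum_univ_succ, ht1, one_smul]
      simp [hzero]
    · set s := ∑ i : Fin n, α i.succ with hs
      have hspos : 0 < s := lt_of_le_of_ne (Finset.sum_nonneg fun i _ => hα i.succ) (Ne.symm hs0)
      set β : Fin n → ℝ := fun i => α i.succ / s with hβ
      have hβnn : ∀ i, 0 ≤ β i := fun i => div_nonneg (hα i.succ) hspos.le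
      have hβsum : ∑ i, β i = 1 := by
        rw [hβ, ← Finset.sum_div]; exact div_self hs0
      have hy : (∑ i, β i • (x i.succ : X)) ∈ K :=
        by
        refine hconv.sum_mem (fun i _ => hβnn i) hβsum (fun i _ => ?_)
        exact (x i.succ).2
      have hsy : s • (∑ i, β i • (x i.succ : X)) = ∑ i : Fin n, α i.succ • (x i.succ : X) := by
        rw [Finset.smul_sum]
        refine Finset.sum_congr rfl fun i _ => ?_
        rw [smul_smul, hβ, mul_div_cancel₀ _ hs0]
      have h1t : 1 - α 0 = s := by linarith
      have key : (∑ i, α i • (x i : X)) =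
          α 0 • (x 0 : X) + (1 - α 0) • (∑ i, β i • (x i.succ : X)) := by
        rw [Fin.sum_univ_succ, h1t, hsy]
      have hmem : α 0 • (x 0 : X) + (1 - α 0) • ((⟨_, hy⟩ : K) : X) ∈ K := key ▸ h
      have e1 : f ⟨_, h⟩ = f ⟨_, hmem⟩ := congrArg f (Subtype.ext key)
      have ht0 : 0 ≤ α 0 := hα 0
      have ht1 : α 0 ≤ 1 := by linarith
      rw [e1, hf (x 0) ⟨_, hy⟩ (α 0) ht0 ht1 hmem]
      have e2 : (f ⟨_, hy⟩ : X) = ∑ i, β i • (f (x i.succ) : X) :=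
        ih β (fun i => x i.succ) hβnn hβsum hy
      rw [e2, Fin.sum_univ_succ, h1t, Finset.smul_sum]
      congr 1
      refine Finset.sum_congr rfl fun i _ => ?_
      rw [smul_smul, hβ, mul_div_cancel₀ _ hs0]

lemma co_comm {X : Type*} [AddCommGroup X] [Module ℝ X] {K : Set X}
    (hconv : Convex ℝ K) {F : Set (K → K)}
    (hF : ∀ f ∈ F, AffOn K f)
    (habel : ∀ f ∈ F, ∀ g ∈ F, f ∘ g = g ∘ f)
    {f g : K → K} (hfc : f ∈ Co K F) (hgc : g ∈ Co K F) : f ∘ g = g ∘ f := by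
  obtain ⟨n, α, p, hpF, hα, hαs, hfx⟩ := hfc
  obtain ⟨m, β, q, hqF, hβ, hβs, hgx⟩ := hgc
  funext x
  apply Subtype.ext
  show (f (g x) : X) = (g (f x) : X)
  have key : ∀ (k : ℕ) (γ : Fin k → ℝ) (r : Fin k → (K → K)) (u : K → K),
      (∀ j, r j ∈ F) → (∀ j, 0 ≤ γ j) → (∑ j, γ j) = 1 →
      (∀ y, (u y : X) = ∑ j, γ j • (r j y : X)) →
      ∀ (v : K → K), v ∈ F → ∀ y : K, (v (u y) : X) = ∑ j, γ j • (v (r j y) : X) := by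
    intro k γ r u hrF hγ hγs hux v hv y
    have hmem : (∑ j, γ j • (r j y : X)) ∈ K := (hux y) ▸ (u y).2
    have : u y = ⟨_, hmem⟩ := Subtype.ext (hux y)
    rw [this]
    exact affOn_sum hconv (hF v hv) k γ (fun j => r j y) hγ hγs hmem
  have L : (f (g x) : X) = ∑ i, ∑ j, (α i * β j) • ((p i) ((q j) x) : X) := by
    rw [hfx (g x)]
    refine Finset.sum_congr rfl fun i _ => ?_
    rw [key m β q g hqF hβ hβs hgx (p i) (hpF i) x, Finset.smul_sum]
    refine Finset.sum_congr rfl fun j _ => ?_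
    rw [smul_smul]
  have R : (g (f x) : X) = ∑ j, ∑ i, (β j * α i) • ((q j) ((p i) x) : X) := by
    rw [hgx (f x)]
    refine Finset.sum_congr rfl fun j _ => ?_
    rw [key n α p f hpF hα hαs hfx (q j) (hqF j) x, Finset.smul_sum]
    refine Finset.sum_congr rfl fun i _ => ?_
    rw [smul_smul]
  rw [L, R, Finset.sum_comm]
  refine Finset.sum_congr rfl fun j _ => Finset.sum_congr rfl fun i _ => ?_
  have hc := congrFun (habel (p i) (hpF i) (q j) (hqF j)) x
  simp only [Function.comp_apply] at hc
  rw [mul_comm, hc]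

theorem stmt2 {X : Type*} [AddCommGroup X] [Module ℝ X] [TopologicalSpace X]
    [IsTopologicalAddGroup X] [ContinuousSMul ℝ X] [T2Space X]
    (K : Set X) (hne : K.Nonempty) (hconv : Convex ℝ K) (hcomp : IsCompact K)
    (F : Set (K → K))
    (hF : ∀ f ∈ F, Continuous f ∧ AffOn K f)
    (hclosed : ∀ f ∈ F, ∀ g ∈ F, f ∘ g ∈ F)
    (habel : ∀ f ∈ F, ∀ g ∈ F, f ∘ g = g ∘ f) :
    ∀ s : Finset (K → K), ↑s ⊆ Co K F → (⋂ f ∈ s, Set.range f).Nonempty := by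
  classical
  have main : ∀ s : Finset (K → K), ↑s ⊆ Co K F →
      ∃ g : K → K, ∀ f ∈ s, ∃ h : K → K, g = f ∘ h := by
    intro s
    induction s using Finset.induction_on with
    | empty => intro _; exact ⟨id, fun f hf => absurd hf (Finset.notMem_empty f)⟩
    | @insert a s ha ih =>
      intro hs
      have hsub : (↑s : Set (K → K)) ⊆ Co K F :=
        fun f hf => hs (Finset.mem_coe.mpr (Finset.mem_insert_of_mem hf))
      obtain ⟨g, hg⟩ := ih hsub
      have haC : a ∈ Co K F := hs (Finset.mem_insert_self a s)
      refine ⟨a ∘ g, fun f hf => ?_⟩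
      rcases Finset.mem_insert.mp hf with rfl | hf
      · exact ⟨g, rfl⟩
      · obtain ⟨h, rfl⟩ := hg f hf
        refine ⟨a ∘ h, ?_⟩
        have : a ∘ f = f ∘ a := co_comm hconv (fun f hf => (hF f hf).2) habel haC (hsub hf)
        calc a ∘ (f ∘ h) = (a ∘ f) ∘ h := rfl
          _ = (f ∘ a) ∘ h := by rw [this]
          _ = f ∘ (a ∘ h) := rfl
  intro s hs
  obtain ⟨g, hg⟩ := main s hs
  obtain ⟨x0, hx0⟩ := hne
  refine ⟨g ⟨x0, hx0⟩, ?_⟩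
  simp only [Set.mem_iInter]
  intro f hf
  obtain ⟨h, rfl⟩ := hg f hf
  exact ⟨h ⟨x0, hx0⟩, rfl⟩
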